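/- Let ℋ be countable with codelengths satisfying the Kraft inequality, fix 0 < β < 1, let h* := argmax_{h∈ℋ} Q_PR(h) subject to Q_RE(h) ≥ β, and let ĥ := argmax_{h∈ℋ} Q̂_PR(h) − φ_D(h, δ) subject to Q̂_RE(h) ≥ β − φ_FN(h, δ). Then for any δ > 0 and any n ≥ 1, with probability at least 1 − 2δ over the draw of the training data, both Q_PR(ĥ) ≥ Q_PR(h*) − 2 φ_D(h*, δ) and Q_RE(ĥ) ≥ β − 2 φ_FN(ĥ, δ). -/

import Mathlib

open MeasureTheory ENNReal

/-- The false discovery rate `R_D(h)`, equal to `∞` when `P(h(X) = 1) = 0`. -/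
noncomputable def RD {𝓧 : Type*} [MeasurableSpace 𝓧] (P : Measure (𝓧 × Bool))
    (h : 𝓧 → Bool) : ℝ≥0∞ :=
  if 0 < P {z : 𝓧 × Bool | h z.1 = true} then
    P {z : 𝓧 × Bool | z.2 = false ∧ h z.1 = true} / P {z : 𝓧 × Bool | h z.1 = true}
  else ⊤

/-- The false negative rate `R_FN(h) = P(h(X) = 0 | Y = 1)`. -/
noncomputable def RFN {𝓧 : Type*} [MeasurableSpace 𝓧] (P : Measure (𝓧 × Bool))
    (h : 𝓧 → Bool) : ℝ≥0∞ :=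
  P {z : 𝓧 × Bool | h z.1 = false ∧ z.2 = true} / P {z : 𝓧 × Bool | z.2 = true}

/-- The precision `Q_PR(h) = P(Y = 1 | h(X) = 1) = 1 - R_D(h)`. -/
noncomputable def QPR {𝓧 : Type*} [MeasurableSpace 𝓧] (P : Measure (𝓧 × Bool))
    (h : 𝓧 → Bool) : ℝ≥0∞ :=
  1 - RD P h

/-- The recall `Q_RE(h) = P(h(X) = 1 | Y = 1) = 1 - R_FN(h)`. -/
noncomputable def QRE {𝓧 : Type*} [MeasurableSpace 𝓧] (P : Measure (𝓧 × Bool))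
    (h : 𝓧 → Bool) : ℝ≥0∞ :=
  1 - RFN P h

/-- The empirical number of discoveries `n_D(h, Zⁿ)`. -/
def nD {𝓧 : Type*} {n : ℕ} (h : 𝓧 → Bool) (ω : Fin n → 𝓧 × Bool) : ℕ :=
  (Finset.univ.filter fun i => h (ω i).1 = true).card

/-- The number of positive training examples `n₁`. -/
def npos {𝓧 : Type*} {n : ℕ} (ω : Fin n → 𝓧 × Bool) : ℕ :=
  (Finset.univ.filter fun i => (ω i).2 = true).card

/-- The empirical false discovery rate `R̂_D(h)`, equal to `∞` when `n_D(h, Zⁿ) = 0`. -/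
noncomputable def RhatD {𝓧 : Type*} {n : ℕ} (h : 𝓧 → Bool) (ω : Fin n → 𝓧 × Bool) : ℝ≥0∞ :=
  if 0 < nD h ω then
    ((Finset.univ.filter fun i => (ω i).2 = false ∧ h (ω i).1 = true).card : ℝ≥0∞)
      / (nD h ω : ℝ≥0∞)
  else ⊤

/-- The empirical false negative rate, equal to `0` when `n₁ = 0`. -/
noncomputable def RhatFN {𝓧 : Type*} {n : ℕ} (h : 𝓧 → Bool) (ω : Fin n → 𝓧 × Bool) : ℝ≥0∞ :=
  if 0 < npos ω then
    ((Finset.univ.filter fun i => (ω i).2 = true ∧ h (ω i).1 = false).card : ℝ≥0∞)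
      / (npos ω : ℝ≥0∞)
  else 0

/-- The empirical precision `Q̂_PR(h) = 1 - R̂_D(h)`. -/
noncomputable def QhatPR {𝓧 : Type*} {n : ℕ} (h : 𝓧 → Bool) (ω : Fin n → 𝓧 × Bool) : ℝ≥0∞ :=
  1 - RhatD h ω

/-- The empirical recall `Q̂_RE(h) = 1 - R̂_FN(h)`. -/
noncomputable def QhatRE {𝓧 : Type*} {n : ℕ} (h : 𝓧 → Bool) (ω : Fin n → 𝓧 × Bool) : ℝ≥0∞ :=
  1 - RhatFN h ω

/-- The penalty `φ_D`: `√((⟦h⟧ log 2 + log(2/δ)) / (2 m))`, equal to `∞` when `m = 0`. -/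
noncomputable def pen (c δ : ℝ) (m : ℕ) : ℝ≥0∞ :=
  if 0 < m then ENNReal.ofReal (Real.sqrt ((c * Real.log 2 + Real.log (2 / δ)) / (2 * m)))
  else ⊤

/-- The penalty `φ_FN`: `√((⟦h⟧ log 2 + log(2/δ)) / (2 m))`, equal to `1` when `m = 0`. -/
noncomputable def penNP (c δ : ℝ) (m : ℕ) : ℝ≥0∞ :=
  if 0 < m then ENNReal.ofReal (Real.sqrt ((c * Real.log 2 + Real.log (2 / δ)) / (2 * m)))
  else 1

section Auxiliary
open Real
open scoped ENNReal NNReal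

lemma hoeffding_mgf {q : ℝ} (hq0 : 0 ≤ q) (hq1 : q ≤ 1) {s : ℝ} (hs : 0 ≤ s) :
    1 - q + q * Real.exp s ≤ Real.exp (q * s + s ^ 2 / 8) := by
  -- d x := 1 - q + q * exp x is positive
  have hd : ∀ x : ℝ, 0 < 1 - q + q * Real.exp x := by
    intro x
    rcases lt_or_eq_of_le hq1 with h | h
    · have : 0 ≤ q * Real.exp x := mul_nonneg hq0 (Real.exp_pos x).le
      linarith
    · have : 0 < q * Real.exp x := by
        rw [h]; simpa using Real.exp_pos x
      linarith
  have hdne : ∀ x : ℝ, (1 - q + q * Real.exp x) ≠ 0 := fun x => (hd x).ne'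
  -- G x := x/4 + q - q * exp x / d x
  set G : ℝ → ℝ := fun x => x / 4 + q - q * Real.exp x / (1 - q + q * Real.exp x) with hG
  have hGd : ∀ x : ℝ, HasDerivAt G
      (1 / 4 - (q * Real.exp x * (1 - q + q * Real.exp x) -
        q * Real.exp x * (q * Real.exp x)) / (1 - q + q * Real.exp x) ^ 2) x := by
    intro x
    have h1 : HasDerivAt (fun y : ℝ => y / 4 + q) (1 / 4) x := by
      simpa using ((hasDerivAt_id x).div_const 4).add_const q
    have he : HasDerivAt (fun y : ℝ => q * Real.exp y) (q * Real.exp x) x :=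
      (Real.hasDerivAt_exp x).const_mul q
    have hden : HasDerivAt (fun y : ℝ => 1 - q + q * Real.exp y) (q * Real.exp x) x :=
      he.const_add (1 - q)
    exact h1.sub (he.div hden (hdne x))
  have hGderiv_nonneg : ∀ x : ℝ, 0 ≤ 1 / 4 - (q * Real.exp x * (1 - q + q * Real.exp x) -
        q * Real.exp x * (q * Real.exp x)) / (1 - q + q * Real.exp x) ^ 2 := by
    intro x
    rw [sub_nonneg, div_le_iff₀ (pow_pos (hd x) 2)]
    have h := hd x
    nlinarith [sq_nonneg (1 - q - q * Real.exp x), Real.exp_pos x]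
  have hGmono : MonotoneOn G (Set.Ici (0:ℝ)) := by
    apply monotoneOn_of_deriv_nonneg (convex_Ici 0)
    · have : Differentiable ℝ G := fun x => (hGd x).differentiableAt
      exact this.continuous.continuousOn
    · exact fun x _ => ((hGd x).differentiableAt).differentiableWithinAt
    · intro x _
      rw [(hGd x).deriv]
      exact hGderiv_nonneg x
  have hG0 : G 0 = 0 := by
    simp [hG, Real.exp_zero]
  have hGnonneg : ∀ x : ℝ, 0 ≤ x → 0 ≤ G x := by
    intro x hx
    have := hGmono (Set.self_mem_Ici) (Set.mem_Ici.2 hx) hx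
    rwa [hG0] at this
  -- F x := q * x + x^2/8 - log (d x)
  set F : ℝ → ℝ := fun x => q * x + x ^ 2 / 8 - Real.log (1 - q + q * Real.exp x) with hF
  have hFd : ∀ x : ℝ, HasDerivAt F
      (q + x / 4 - q * Real.exp x / (1 - q + q * Real.exp x)) x := by
    intro x
    have h1 : HasDerivAt (fun y : ℝ => q * y + y ^ 2 / 8)
        (q * 1 + (2 : ℕ) * x ^ 1 / 8) x := by
      exact ((hasDerivAt_id x).const_mul q).add ((hasDerivAt_pow 2 x).div_const 8)
    have he : HasDerivAt (fun y : ℝ => q * Real.exp y) (q * Real.exp x) x :=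
      (Real.hasDerivAt_exp x).const_mul q
    have hden : HasDerivAt (fun y : ℝ => 1 - q + q * Real.exp y) (q * Real.exp x) x :=
      he.const_add (1 - q)
    have hlog : HasDerivAt (fun y : ℝ => Real.log (1 - q + q * Real.exp y))
        (q * Real.exp x / (1 - q + q * Real.exp x)) x := hden.log (hdne x)
    have := h1.sub hlog
    convert this using 1
    · rfl
    · rfl
    · rfl
    · ring
  have hFmono : MonotoneOn F (Set.Ici (0:ℝ)) := by
    apply monotoneOn_of_deriv_nonneg (convex_Ici 0)
    · have : Differentiable ℝ F := fun x => (hFd x).differentiableAt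
      exact this.continuous.continuousOn
    · exact fun x _ => ((hFd x).differentiableAt).differentiableWithinAt
    · intro x hx
      rw [(hFd x).deriv]
      have := hGnonneg x (le_of_lt (by simpa using hx))
      simp only [hG] at this
      linarith
  have hF0 : F 0 = 0 := by
    simp [hF, Real.exp_zero]
  have hFs : 0 ≤ F s := by
    have := hFmono (Set.self_mem_Ici) (Set.mem_Ici.2 hs) hs
    rwa [hF0] at this
  have hlog_le : Real.log (1 - q + q * Real.exp s) ≤ q * s + s ^ 2 / 8 := by
    simp only [hF] at hFs; linarith
  calc 1 - q + q * Real.exp s = Real.exp (Real.log (1 - q + q * Real.exp s)) :=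
        (Real.exp_log (hd s)).symm
    _ ≤ Real.exp (q * s + s ^ 2 / 8) := Real.exp_le_exp.2 hlog_le

lemma binom_upper_tail {q t : ℝ} (hq0 : 0 ≤ q) (hq1 : q ≤ 1) (ht : 0 ≤ t) (m : ℕ) :
    ∑ k ∈ (Finset.range (m+1)).filter (fun k : ℕ => (m:ℝ)*(q+t) ≤ (k:ℝ)),
      (m.choose k : ℝ) * q^k * (1-q)^(m-k) ≤ Real.exp (-(2*m*t^2)) := by
  have h1q : (0:ℝ) ≤ 1 - q := by linarith
  have hterm_nonneg : ∀ k, 0 ≤ (m.choose k : ℝ) * q^k * (1-q)^(m-k) := fun k =>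
    mul_nonneg (mul_nonneg (Nat.cast_nonneg _) (pow_nonneg hq0 _)) (pow_nonneg h1q _)
  have step1 : ∑ k ∈ (Finset.range (m+1)).filter (fun k : ℕ => (m:ℝ)*(q+t) ≤ (k:ℝ)),
      (m.choose k : ℝ) * q^k * (1-q)^(m-k)
      ≤ ∑ k ∈ Finset.range (m+1),
        Real.exp (-(4*t*m*(q+t))) * ((q * Real.exp (4*t))^k * (1-q)^(m-k) * (m.choose k : ℝ)) := by
    apply le_trans (Finset.sum_le_sum ?_)
      (Finset.sum_le_sum_of_subset_of_nonneg (Finset.filter_subset _ _) ?_)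
    · intro k hk
      rw [Finset.mem_filter] at hk
      have hge : (m:ℝ)*(q+t) ≤ k := hk.2
      have h1 : (1:ℝ) ≤ Real.exp (-(4*t*↑m*(q+t))) * Real.exp (4*t) ^ k := by
        rw [← Real.exp_nat_mul, ← Real.exp_add]
        apply Real.one_le_exp
        nlinarith
      calc (m.choose k:ℝ)*q^k*(1-q)^(m-k)
          = 1 * ((m.choose k:ℝ)*q^k*(1-q)^(m-k)) := (one_mul _).symm
        _ ≤ (Real.exp (-(4*t*↑m*(q+t))) * Real.exp (4*t)^k) *
            ((m.choose k:ℝ)*q^k*(1-q)^(m-k)) :=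
            mul_le_mul_of_nonneg_right h1 (hterm_nonneg k)
        _ = Real.exp (-(4*t*↑m*(q+t))) *
            ((q * Real.exp (4*t))^k * (1-q)^(m-k) * (m.choose k : ℝ)) := by
            rw [mul_pow]; ring
    · intro k _ _
      have h2 : (0:ℝ) ≤ (q * Real.exp (4*t))^k := pow_nonneg (mul_nonneg hq0 (Real.exp_pos _).le) _
      exact mul_nonneg (Real.exp_pos _).le
        (mul_nonneg (mul_nonneg h2 (pow_nonneg h1q _)) (Nat.cast_nonneg _))
  apply step1.trans
  rw [← Finset.mul_sum]
  have hbinom : ∑ k ∈ Finset.range (m+1),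
      (q*Real.exp (4*t))^k * (1-q)^(m-k) * (m.choose k:ℝ)
      = (q*Real.exp (4*t) + (1-q))^m := (add_pow _ _ m).symm
  rw [hbinom]
  have hbase : q*Real.exp (4*t) + (1-q) ≤ Real.exp (4*t*q + 2*t^2) := by
    have h := hoeffding_mgf hq0 hq1 (s := 4*t) (by linarith)
    have he : Real.exp (q*(4*t) + (4*t)^2/8) = Real.exp (4*t*q + 2*t^2) := by
      congr 1; ring
    rw [he] at h
    linarith
  have hbase0 : (0:ℝ) ≤ q*Real.exp (4*t) + (1-q) :=
    add_nonneg (mul_nonneg hq0 (Real.exp_pos _).le) h1q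
  calc Real.exp (-(4*t*↑m*(q+t))) * (q*Real.exp (4*t) + (1-q))^m
      ≤ Real.exp (-(4*t*↑m*(q+t))) * Real.exp (4*t*q + 2*t^2)^m :=
        mul_le_mul_of_nonneg_left (pow_le_pow_left₀ hbase0 hbase m) (Real.exp_pos _).le
    _ = Real.exp (-(4*t*↑m*(q+t)) + ↑m * (4*t*q + 2*t^2)) := by
        rw [← Real.exp_nat_mul, ← Real.exp_add]
    _ = Real.exp (-(2*↑m*t^2)) := by congr 1; ring


lemma binom_lower_tail {q t : ℝ} (hq0 : 0 ≤ q) (hq1 : q ≤ 1) (ht : 0 ≤ t) (m : ℕ) :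
    ∑ k ∈ (Finset.range (m+1)).filter (fun k : ℕ => (k:ℝ) ≤ (m:ℝ)*(q-t)),
      (m.choose k : ℝ) * q^k * (1-q)^(m-k) ≤ Real.exp (-(2*m*t^2)) := by
  have h := binom_upper_tail (q := 1-q) (t := t) (by linarith) (by linarith) ht m
  refine le_trans (le_of_eq ?_) h
  refine Finset.sum_bij' (fun k _ => m - k) (fun k _ => m - k) ?_ ?_ ?_ ?_ ?_
  · intro k hk
    rw [Finset.mem_filter, Finset.mem_range] at hk ⊢
    have hkm : k ≤ m := Nat.lt_succ_iff.1 hk.1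
    constructor
    · omega
    · rw [Nat.cast_sub hkm]
      have := hk.2
      push_cast
      linarith
  · intro k hk
    rw [Finset.mem_filter, Finset.mem_range] at hk ⊢
    have hkm : k ≤ m := Nat.lt_succ_iff.1 hk.1
    constructor
    · omega
    · rw [Nat.cast_sub hkm]
      have := hk.2
      push_cast at this ⊢
      linarith
  · intro k hk
    rw [Finset.mem_filter, Finset.mem_range] at hk
    have hkm : k ≤ m := Nat.lt_succ_iff.1 hk.1
    omega
  · intro k hk
    rw [Finset.mem_filter, Finset.mem_range] at hk
    have hkm : k ≤ m := Nat.lt_succ_iff.1 hk.1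
    omega
  · intro k hk
    rw [Finset.mem_filter, Finset.mem_range] at hk
    have hkm : k ≤ m := Nat.lt_succ_iff.1 hk.1
    rw [Nat.choose_symm hkm, Nat.sub_sub_self hkm, _root_.sub_sub_cancel]
    ring

lemma binom_two_tails {q t : ℝ} (hq0 : 0 ≤ q) (hq1 : q ≤ 1) (ht : 0 ≤ t) (m : ℕ)
    (F : ℕ → Prop) [DecidablePred F]
    (hF : ∀ k ≤ m, F k → (m:ℝ)*(q+t) ≤ (k:ℝ) ∨ (k:ℝ) ≤ (m:ℝ)*(q-t)) :
    ∑ k ∈ (Finset.range (m+1)).filter F,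
      (m.choose k : ℝ) * q^k * (1-q)^(m-k) ≤ 2 * Real.exp (-(2*m*t^2)) := by
  have h1q : (0:ℝ) ≤ 1 - q := by linarith
  have hterm_nonneg : ∀ k, 0 ≤ (m.choose k : ℝ) * q^k * (1-q)^(m-k) := fun k =>
    mul_nonneg (mul_nonneg (Nat.cast_nonneg _) (pow_nonneg hq0 _)) (pow_nonneg h1q _)
  set A := (Finset.range (m+1)).filter (fun k : ℕ => (m:ℝ)*(q+t) ≤ (k:ℝ)) with hA
  set B := (Finset.range (m+1)).filter (fun k : ℕ => (k:ℝ) ≤ (m:ℝ)*(q-t)) with hB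
  have hsub : (Finset.range (m+1)).filter F ⊆ A ∪ B := by
    intro k hk
    rw [Finset.mem_filter] at hk
    have hkm : k ≤ m := Nat.lt_succ_iff.1 (Finset.mem_range.1 hk.1)
    rcases hF k hkm hk.2 with h | h
    · exact Finset.mem_union_left _ (Finset.mem_filter.2 ⟨hk.1, h⟩)
    · exact Finset.mem_union_right _ (Finset.mem_filter.2 ⟨hk.1, h⟩)
  calc ∑ k ∈ (Finset.range (m+1)).filter F, (m.choose k : ℝ) * q^k * (1-q)^(m-k)
      ≤ ∑ k ∈ A ∪ B, (m.choose k : ℝ) * q^k * (1-q)^(m-k) :=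
        Finset.sum_le_sum_of_subset_of_nonneg hsub (fun k _ _ => hterm_nonneg k)
    _ = ∑ k ∈ A, (m.choose k : ℝ) * q^k * (1-q)^(m-k)
        + ∑ k ∈ B \ A, (m.choose k : ℝ) * q^k * (1-q)^(m-k) := by
        rw [← Finset.sum_union Finset.disjoint_sdiff, Finset.union_sdiff_self_eq_union]
    _ ≤ ∑ k ∈ A, (m.choose k : ℝ) * q^k * (1-q)^(m-k)
        + ∑ k ∈ B, (m.choose k : ℝ) * q^k * (1-q)^(m-k) := by
        apply add_le_add_right
        exact Finset.sum_le_sum_of_subset_of_nonneg (Finset.sdiff_subset)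
          (fun k _ _ => hterm_nonneg k)
    _ ≤ Real.exp (-(2*m*t^2)) + Real.exp (-(2*m*t^2)) := by
        gcongr
        · exact binom_upper_tail hq0 hq1 ht m
        · exact binom_lower_tail hq0 hq1 ht m
    _ = 2 * Real.exp (-(2*m*t^2)) := by ring

open MeasureTheory in
open scoped Classical in
lemma measure_count_event_le {Z : Type*} [MeasurableSpace Z] (P : Measure Z)
    [IsProbabilityMeasure P] (g v : Z → Bool) (hg : Measurable g) (hv : Measurable v)
    (n : ℕ) (F : ℕ → ℕ → Prop) (ε : ℝ≥0∞)
    (hF00 : ¬ F 0 0)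
    (hin : ∀ m, 1 ≤ m → m ≤ n →
      ∑ k ∈ Finset.range (m+1), (if F m k then (m.choose k : ℝ≥0∞) *
        (P {z | g z = true ∧ v z = false})^k * (P {z | g z = true ∧ v z = true})^(m-k) else 0)
        ≤ ε * (P {z | g z = true})^m) :
    (Measure.pi fun _ : Fin n => P)
      {ω | F ((Finset.univ.filter fun i => g (ω i) = true).card)
           ((Finset.univ.filter fun i => g (ω i) = true ∧ v (ω i) = false).card)} ≤ ε := by
  set w0 := P {z | g z = false} with hw0
  set w1 := P {z | g z = true ∧ v z = false} with hw1
  set w2 := P {z | g z = true ∧ v z = true} with hw2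
  set p := P {z | g z = true} with hp
  have hm1 : MeasurableSet {z | g z = true ∧ v z = false} :=
    (hg (measurableSet_singleton true)).inter (hv (measurableSet_singleton false))
  have hm2 : MeasurableSet {z | g z = true ∧ v z = true} :=
    (hg (measurableSet_singleton true)).inter (hv (measurableSet_singleton true))
  have hm0 : MeasurableSet {z | g z = false} := hg (measurableSet_singleton false)
  have hmp : MeasurableSet {z | g z = true} := hg (measurableSet_singleton true)
  have hw12 : w1 + w2 = p := by
    rw [hw1, hw2, hp, ← measure_union ?_ hm2]
    · congr 1
      ext z
      by_cases hgz : g z = true <;> by_cases hvz : v z = true <;>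
        simp [hgz, hvz] <;> simp_all
    · rw [Set.disjoint_left]
      rintro z ⟨_, h1⟩ ⟨_, h2⟩
      rw [h1] at h2
      simp at h2
  have hw0p : p + w0 = 1 := by
    rw [hp, hw0, ← measure_union ?_ hm0]
    · have : {z | g z = true} ∪ {z | g z = false} = Set.univ := by
        ext z; by_cases hgz : g z = true <;> simp [hgz] <;> simp_all
      rw [this, measure_univ]
    · rw [Set.disjoint_left]
      rintro z h1 h2
      simp only [Set.mem_setOf_eq] at h1 h2
      rw [h1] at h2
      simp at h2
  -- cylinder sets
  set C : Finset (Fin n) → Finset (Fin n) → Set (Fin n → Z) := fun S T =>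
    {ω | (Finset.univ.filter fun i => g (ω i) = true) = S ∧
      (Finset.univ.filter fun i => g (ω i) = true ∧ v (ω i) = false) = T} with hC
  set B : Finset (Fin n) → Finset (Fin n) → Fin n → Set Z := fun S T i =>
    if i ∈ T then {z | g z = true ∧ v z = false}
    else if i ∈ S then {z | g z = true ∧ v z = true}
    else {z | g z = false} with hB
  have hCpi : ∀ S T : Finset (Fin n), T ⊆ S → C S T = Set.pi Set.univ (B S T) := by
    intro S T hTS
    ext ω
    simp only [hC, hB, Set.mem_setOf_eq, Set.mem_pi, Set.mem_univ, forall_true_left]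
    constructor
    · rintro ⟨hS, hT⟩ i
      have hSmem : i ∈ S ↔ g (ω i) = true := by rw [← hS]; simp
      have hTmem : i ∈ T ↔ (g (ω i) = true ∧ v (ω i) = false) := by rw [← hT]; simp
      by_cases hiT : i ∈ T
      · simp only [hiT, if_true, Set.mem_setOf_eq]
        exact hTmem.1 hiT
      · by_cases hiS : i ∈ S
        · simp only [hiT, hiS, if_false, if_true, Set.mem_setOf_eq]
          refine ⟨hSmem.1 hiS, ?_⟩
          cases hvi : v (ω i)
          · exact absurd (hTmem.2 ⟨hSmem.1 hiS, hvi⟩) hiT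
          · rfl
        · simp only [hiT, hiS, if_false, Set.mem_setOf_eq]
          cases hgi : g (ω i)
          · rfl
          · exact absurd (hSmem.2 hgi) hiS
    · intro hpi
      have key : ∀ i : Fin n, (i ∈ T → (g (ω i) = true ∧ v (ω i) = false)) ∧
          (i ∈ S → i ∉ T → (g (ω i) = true ∧ v (ω i) = true)) ∧
          (i ∉ S → g (ω i) = false) := by
        intro i
        have h := hpi i
        refine ⟨fun hiT => ?_, fun hiS hiT => ?_, fun hiS => ?_⟩
        · simpa [hiT] using h
        · simpa [hiT, hiS] using h
        · have hiT : i ∉ T := fun h' => hiS (hTS h')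
          simpa [hiT, hiS] using h
      constructor
      · ext i
        simp only [Finset.mem_filter, Finset.mem_univ, true_and]
        constructor
        · intro hgi
          by_contra hiS
          rw [(key i).2.2 hiS] at hgi
          simp at hgi
        · intro hiS
          by_cases hiT : i ∈ T
          · exact ((key i).1 hiT).1
          · exact ((key i).2.1 hiS hiT).1
      · ext i
        simp only [Finset.mem_filter, Finset.mem_univ, true_and]
        constructor
        · rintro ⟨hgi, hvi⟩
          by_contra hiT
          by_cases hiS : i ∈ S
          · rw [((key i).2.1 hiS hiT).2] at hvi; simp at hvi
          · rw [(key i).2.2 hiS] at hgi; simp at hgi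
        · intro hiT
          exact (key i).1 hiT
  have hCmeas : ∀ S T : Finset (Fin n), T ⊆ S → MeasurableSet (C S T) := by
    intro S T hTS
    rw [hCpi S T hTS]
    apply MeasurableSet.univ_pi
    intro i
    rw [hB]
    dsimp only
    split
    · exact hm1
    · split
      · exact hm2
      · exact hm0
  have hCml : ∀ S T : Finset (Fin n), T ⊆ S →
      (Measure.pi fun _ : Fin n => P) (C S T) =
        w1 ^ T.card * w2 ^ (S.card - T.card) * w0 ^ (n - S.card) := by
    intro S T hTS
    rw [hCpi S T hTS, Measure.pi_pi]
    have h0 : ∀ i ∈ Finset.univ \ S, P (B S T i) = w0 := by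
      intro i hi
      rw [Finset.mem_sdiff] at hi
      have hiS : i ∉ S := hi.2
      have hiT : i ∉ T := fun h => hiS (hTS h)
      simp only [hB, hiT, hiS, if_false, hw0]
    have h2 : ∀ i ∈ S \ T, P (B S T i) = w2 := by
      intro i hi
      rw [Finset.mem_sdiff] at hi
      simp only [hB, hi.2, hi.1, if_false, if_true, hw2]
    have h1 : ∀ i ∈ T, P (B S T i) = w1 := by
      intro i hi
      simp only [hB, hi, if_true, hw1]
    calc ∏ i, P (B S T i)
        = (∏ i ∈ Finset.univ \ S, P (B S T i)) * ∏ i ∈ S, P (B S T i) :=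
          (Finset.prod_sdiff (Finset.subset_univ S)).symm
      _ = w0 ^ (n - S.card) * ((∏ i ∈ S \ T, P (B S T i)) * ∏ i ∈ T, P (B S T i)) := by
          rw [Finset.prod_congr rfl h0, Finset.prod_const,
            Finset.card_sdiff_of_subset (Finset.subset_univ S), Finset.card_univ, Fintype.card_fin,
            Finset.prod_sdiff hTS]
      _ = w0 ^ (n - S.card) * (w2 ^ (S.card - T.card) * w1 ^ T.card) := by
          rw [Finset.prod_congr rfl h2, Finset.prod_const, Finset.card_sdiff_of_subset hTS,
            Finset.prod_congr rfl h1, Finset.prod_const]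
      _ = w1 ^ T.card * w2 ^ (S.card - T.card) * w0 ^ (n - S.card) := by ring
  -- the index finset
  set J : Finset (Σ _ : Finset (Fin n), Finset (Fin n)) :=
    Finset.univ.powerset.sigma (fun S => S.powerset) with hJ
  have hsub_mem : ∀ x : Σ _ : Finset (Fin n), Finset (Fin n), x ∈ J ↔ x.2 ⊆ x.1 := by
    intro x
    rw [hJ, Finset.mem_sigma, Finset.mem_powerset, Finset.mem_powerset]
    exact ⟨fun h => h.2, fun h => ⟨Finset.subset_univ _, h⟩⟩
  have hevent : {ω : Fin n → Z | F ((Finset.univ.filter fun i => g (ω i) = true).card)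
           ((Finset.univ.filter fun i => g (ω i) = true ∧ v (ω i) = false).card)} =
      ⋃ x ∈ J.filter (fun x => F x.1.card x.2.card), C x.1 x.2 := by
    ext ω
    simp only [Set.mem_setOf_eq, Set.mem_iUnion, Finset.mem_filter, exists_prop]
    constructor
    · intro hF
      refine ⟨⟨Finset.univ.filter fun i => g (ω i) = true,
        Finset.univ.filter fun i => g (ω i) = true ∧ v (ω i) = false⟩, ⟨?_, hF⟩, rfl, rfl⟩
      rw [hsub_mem]
      intro i hi
      simp only [Finset.mem_filter] at hi ⊢
      exact ⟨hi.1, hi.2.1⟩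
    · rintro ⟨⟨S, T⟩, ⟨hmem, hFx⟩, h1, h2⟩
      simp only [hC, Set.mem_setOf_eq] at h1 h2
      rw [h1, h2]
      exact hFx
  rw [hevent]
  rw [measure_biUnion_finset ?_ ?_]
  rotate_left
  · rintro ⟨S, T⟩ hST ⟨S', T'⟩ hST' hne
    simp only [Function.onFun]
    rw [Set.disjoint_left]
    rintro ω ⟨h1, h2⟩ ⟨h3, h4⟩
    apply hne
    have hS : S = S' := h1 ▸ h3
    have hT : T = T' := h2 ▸ h4
    subst hS; subst hT; rfl
  · rintro ⟨S, T⟩ hST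
    rw [Finset.mem_filter] at hST
    exact hCmeas S T ((hsub_mem _).1 hST.1)
  -- main bound
  have hterm : ∀ x ∈ J.filter (fun x => F x.1.card x.2.card),
      (Measure.pi fun _ : Fin n => P) (C x.1 x.2) =
        w1 ^ x.2.card * w2 ^ (x.1.card - x.2.card) * w0 ^ (n - x.1.card) := by
    rintro ⟨S, T⟩ hST
    rw [Finset.mem_filter] at hST
    exact hCml S T ((hsub_mem _).1 hST.1)
  rw [Finset.sum_congr rfl hterm, Finset.sum_filter, Finset.sum_sigma]
  have hinner : ∀ S ∈ Finset.univ.powerset (α := Fin n),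
      (∑ T ∈ S.powerset, if F S.card T.card then
        w1 ^ T.card * w2 ^ (S.card - T.card) * w0 ^ (n - S.card) else 0)
      ≤ ε * p ^ S.card * w0 ^ (n - S.card) := by
    intro S _
    have hfac : ∀ T ∈ S.powerset,
        (if F S.card T.card then w1 ^ T.card * w2 ^ (S.card - T.card) * w0 ^ (n - S.card)
          else 0)
        = (if F S.card T.card then w1 ^ T.card * w2 ^ (S.card - T.card) else 0)
          * w0 ^ (n - S.card) := by
      intro T _; split <;> simp
    rw [Finset.sum_congr rfl hfac, ← Finset.sum_mul]
    apply mul_le_mul_left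
    have := Finset.sum_powerset_apply_card
      (fun m => if F S.card m then w1 ^ m * w2 ^ (S.card - m) else 0) (x := S)
    rw [this]
    have hsimp : ∀ k ∈ Finset.range (S.card + 1),
        (S.card.choose k) • (if F S.card k then w1 ^ k * w2 ^ (S.card - k) else 0)
        = if F S.card k then (S.card.choose k : ℝ≥0∞) * w1 ^ k * w2 ^ (S.card - k) else 0 := by
      intro k _
      split <;> simp [nsmul_eq_mul, mul_assoc]
    rw [Finset.sum_congr rfl hsimp]
    rcases Nat.eq_zero_or_pos S.card with hm | hm
    · rw [hm]
      simp [hF00]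
    · exact hin S.card hm (by
        simpa using Finset.card_le_card (Finset.subset_univ S))
  calc ∑ S ∈ Finset.univ.powerset (α := Fin n), ∑ T ∈ S.powerset,
        (if F S.card T.card then
          w1 ^ T.card * w2 ^ (S.card - T.card) * w0 ^ (n - S.card) else 0)
      ≤ ∑ S ∈ Finset.univ.powerset (α := Fin n), ε * p ^ S.card * w0 ^ (n - S.card) :=
        Finset.sum_le_sum hinner
    _ = ε * ∑ k ∈ Finset.range (n + 1), (n.choose k : ℝ≥0∞) * (p ^ k * w0 ^ (n - k)) := by
        have := Finset.sum_powerset_apply_card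
          (fun m => ε * p ^ m * w0 ^ (n - m)) (x := (Finset.univ : Finset (Fin n)))
        simp only [Finset.card_univ, Fintype.card_fin] at this
        rw [this, Finset.mul_sum]
        refine Finset.sum_congr rfl fun k _ => ?_
        simp [nsmul_eq_mul]
        ring
    _ = ε * (p + w0) ^ n := by
        congr 1
        rw [add_pow]
        refine Finset.sum_congr rfl fun k _ => ?_
        ring
    _ = ε := by rw [hw0p, one_pow, mul_one]

open MeasureTheory in
open scoped Classical in
lemma concentration_bound {Z : Type*} [MeasurableSpace Z] (P : Measure Z)
    [IsProbabilityMeasure P] (g v : Z → Bool) (hg : Measurable g) (hv : Measurable v)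
    (n : ℕ) (c δ : ℝ) (hc : 0 ≤ c) (hδ0 : 0 < δ) (hδ2 : δ < 2) (F : ℕ → ℕ → Prop)
    (hF00 : ¬ F 0 0)
    (hF : ∀ m k : ℕ, 1 ≤ m → k ≤ m → 0 < P {z | g z = true} → F m k →
      ((m:ℝ) * ((P {z | g z = true ∧ v z = false} / P {z | g z = true}).toReal
          + Real.sqrt ((c * Real.log 2 + Real.log (2/δ)) / (2*m))) ≤ (k:ℝ)
        ∨ (k:ℝ) ≤ (m:ℝ) * ((P {z | g z = true ∧ v z = false} / P {z | g z = true}).toReal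
          - Real.sqrt ((c * Real.log 2 + Real.log (2/δ)) / (2*m))))) :
    (Measure.pi fun _ : Fin n => P)
      {ω | F ((Finset.univ.filter fun i => g (ω i) = true).card)
           ((Finset.univ.filter fun i => g (ω i) = true ∧ v (ω i) = false).card)}
      ≤ ENNReal.ofReal (δ * (2:ℝ) ^ (-c)) := by
  set w1 := P {z | g z = true ∧ v z = false} with hw1
  set w2 := P {z | g z = true ∧ v z = true} with hw2
  set p := P {z | g z = true} with hp
  have hlog : 0 ≤ Real.log (2/δ) := Real.log_nonneg (by
    rw [le_div_iff₀ hδ0]; linarith)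
  apply measure_count_event_le P g v hg hv n F _ hF00
  intro m hm1 hmn
  have hw1p : w1 ≤ p := measure_mono (fun z hz => hz.1)
  have hw2p : w2 ≤ p := measure_mono (fun z hz => hz.1)
  rcases eq_or_lt_of_le (zero_le : (0:ℝ≥0∞) ≤ p) with hp0 | hp0
  · -- p = 0
    have hw10 : w1 = 0 := le_antisymm (hp0 ▸ hw1p) zero_le
    have hw20 : w2 = 0 := le_antisymm (hp0 ▸ hw2p) zero_le
    have : ∀ k ∈ Finset.range (m+1),
        (if F m k then (m.choose k : ℝ≥0∞) * w1^k * w2^(m-k) else 0) = 0 := by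
      intro k hk
      split
      · rcases Nat.eq_zero_or_pos k with hk0 | hk0
        · subst hk0
          rw [hw20, zero_pow (by omega)]
          ring
        · rw [hw10, zero_pow (by omega)]
          ring
      · rfl
    rw [Finset.sum_congr rfl this, Finset.sum_const, smul_zero]
    exact zero_le
  · -- p > 0
    have hpfin : p ≠ ⊤ := (measure_lt_top P _).ne
    have hw1fin : w1 ≠ ⊤ := (measure_lt_top P _).ne
    have hw2fin : w2 ≠ ⊤ := (measure_lt_top P _).ne
    set pr := p.toReal with hpr
    have hpr0 : 0 < pr := ENNReal.toReal_pos hp0.ne' hpfin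
    set a := w1.toReal with ha
    set q := a / pr with hq
    have ha0 : 0 ≤ a := ENNReal.toReal_nonneg
    have haple : a ≤ pr := ENNReal.toReal_mono hpfin hw1p
    have hq0 : 0 ≤ q := div_nonneg ha0 hpr0.le
    have hq1 : q ≤ 1 := (div_le_one hpr0).2 haple
    have hqRD : (w1 / p).toReal = q := by
      rw [hq, ha, hpr, ENNReal.toReal_div]
    have hbval : w2.toReal = pr - a := by
      have hm2' : MeasurableSet {z | g z = true ∧ v z = true} :=
        (hg (measurableSet_singleton true)).inter (hv (measurableSet_singleton true))
      have : w1 + w2 = p := by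
        rw [hw1, hw2, hp, ← measure_union ?_ hm2']
        · congr 1
          ext z
          by_cases hgz : g z = true <;> by_cases hvz : v z = true <;> simp [hgz, hvz] <;>
            simp_all
        · rw [Set.disjoint_left]
          rintro z ⟨_, h1⟩ ⟨_, h2⟩
          rw [h1] at h2
          simp at h2
      have := congrArg ENNReal.toReal this
      rw [ENNReal.toReal_add hw1fin hw2fin] at this
      rw [← hpr] at this
      linarith [this]
    have hb0 : 0 ≤ pr - a := by
      rw [← hbval]; exact ENNReal.toReal_nonneg
    -- t for this m
    set t := Real.sqrt ((c * Real.log 2 + Real.log (2/δ)) / (2*m)) with ht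
    have ht0 : 0 ≤ t := Real.sqrt_nonneg _
    have htsq : t^2 = (c * Real.log 2 + Real.log (2/δ)) / (2*m) := by
      rw [ht, Real.sq_sqrt]
      positivity
    -- rewrite the sum in terms of reals
    have hw1R : w1 = ENNReal.ofReal a := by rw [ha, ENNReal.ofReal_toReal hw1fin]
    have hw2R : w2 = ENNReal.ofReal (pr - a) := by
      rw [← hbval, ENNReal.ofReal_toReal hw2fin]
    have hpR : p = ENNReal.ofReal pr := by rw [hpr, ENNReal.ofReal_toReal hpfin]
    have haq : a = pr * q := by
      rw [hq]; field_simp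
    have hbq : pr - a = pr * (1 - q) := by
      rw [haq]; ring
    have hterm : ∀ k ∈ Finset.range (m+1),
        (if F m k then (m.choose k : ℝ≥0∞) * w1^k * w2^(m-k) else 0)
        = ENNReal.ofReal (if F m k then pr^m * ((m.choose k : ℝ) * q^k * (1-q)^(m-k)) else 0) := by
      intro k hk
      rw [Finset.mem_range, Nat.lt_succ_iff] at hk
      split
      · rw [hw1R, hw2R, ← ENNReal.ofReal_natCast,
          ← ENNReal.ofReal_pow ha0, ← ENNReal.ofReal_pow hb0,
          ← ENNReal.ofReal_mul (by positivity), ← ENNReal.ofReal_mul (by positivity)]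
        congr 1
        rw [haq]
        have hpm : pr ^ k * pr ^ (m-k) = pr ^ m := by
          rw [← pow_add, Nat.add_sub_cancel' hk]
        rw [show pr - pr*q = pr*(1-q) from by ring, mul_pow, mul_pow, ← hpm]
        ring
      · simp
    rw [Finset.sum_congr rfl hterm, ← ENNReal.ofReal_sum_of_nonneg (by
      intro k hk
      split
      · have h1q : (0:ℝ) ≤ 1 - q := by linarith
        have := mul_nonneg (mul_nonneg (Nat.cast_nonneg (m.choose k)) (pow_nonneg hq0 k))
          (pow_nonneg h1q (m-k))
        positivity
      · exact le_refl 0)]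
    rw [← hp, hpR, ← ENNReal.ofReal_pow hpr0.le, ← ENNReal.ofReal_mul (by positivity)]
    apply ENNReal.ofReal_le_ofReal
    have hfac : ∀ k ∈ Finset.range (m+1),
        (if F m k then pr^m * ((m.choose k:ℝ) * q^k * (1-q)^(m-k)) else 0)
        = pr^m * (if F m k then (m.choose k:ℝ) * q^k * (1-q)^(m-k) else 0) := by
      intro k _; split <;> simp
    rw [Finset.sum_congr rfl hfac, ← Finset.mul_sum,
      show δ * (2:ℝ)^(-c) * pr^m = pr^m * (δ * (2:ℝ)^(-c)) from by ring]
    apply mul_le_mul_of_nonneg_left _ (by positivity)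
    -- core: binomial two tails
    have hsum : ∑ k ∈ Finset.range (m+1), (if F m k then (m.choose k:ℝ) * q^k * (1-q)^(m-k) else 0)
        = ∑ k ∈ (Finset.range (m+1)).filter (F m), (m.choose k:ℝ) * q^k * (1-q)^(m-k) :=
      (Finset.sum_filter _ _).symm
    rw [hsum]
    have htails := binom_two_tails hq0 hq1 ht0 m (F m) (by
      intro k hk hFk
      have := hF m k hm1 hk hp0 hFk
      rw [hqRD] at this
      rw [← ht] at this
      tauto)
    apply htails.trans
    -- 2 * exp(-2mt^2) = δ * 2^(-c)
    have h2m : (0:ℝ) < 2*m := by positivity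
    have : -(2*(m:ℝ)*t^2) = -(c * Real.log 2) + -(Real.log (2/δ)) := by
      rw [htsq]
      field_simp
      ring
    rw [this, Real.exp_add]
    have e1 : Real.exp (-(c * Real.log 2)) = (2:ℝ)^(-c) := by
      rw [Real.rpow_def_of_pos (by norm_num : (0:ℝ) < 2)]
      congr 1
      ring
    have e2 : Real.exp (-(Real.log (2/δ))) = δ/2 := by
      rw [Real.exp_neg, Real.exp_log (by positivity)]
      field_simp
    rw [e1, e2]
    ring_nf
    exact le_refl _

end Auxiliary

open scoped Classical in
lemma badD_bound {𝓧 : Type*} [MeasurableSpace 𝓧] (P : Measure (𝓧 × Bool))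
    [IsProbabilityMeasure P] (h : 𝓧 → Bool) (hgm : Measurable h)
    (c δ : ℝ) (hc : 0 ≤ c) (hδ0 : 0 < δ) (hδ2 : δ < 2) (n : ℕ) :
    (Measure.pi fun _ : Fin n => P)
      {ω : Fin n → 𝓧 × Bool | ¬(RD P h ≤ RhatD h ω + pen c δ (nD h ω) ∧
        RhatD h ω ≤ RD P h + pen c δ (nD h ω))}
      ≤ ENNReal.ofReal δ * (2:ℝ≥0∞) ^ (-c) := by
  set F : ℕ → ℕ → Prop := fun m k =>
    ¬(RD P h ≤ (if 0 < m then (k:ℝ≥0∞)/(m:ℝ≥0∞) else ⊤) + pen c δ m ∧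
      (if 0 < m then (k:ℝ≥0∞)/(m:ℝ≥0∞) else ⊤) ≤ RD P h + pen c δ m) with hFdef
  have hnum : ∀ ω : Fin n → 𝓧 × Bool,
      (Finset.univ.filter fun i => (ω i).2 = false ∧ h (ω i).1 = true)
      = (Finset.univ.filter fun i => h (ω i).1 = true ∧ (ω i).2 = false) := by
    intro ω; ext i; simp [and_comm]
  have hswap : {z : 𝓧 × Bool | z.2 = false ∧ h z.1 = true}
      = {z : 𝓧 × Bool | h z.1 = true ∧ z.2 = false} := by ext z; exact and_comm
  have hset : {ω : Fin n → 𝓧 × Bool | ¬(RD P h ≤ RhatD h ω + pen c δ (nD h ω) ∧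
        RhatD h ω ≤ RD P h + pen c δ (nD h ω))} =
      {ω : Fin n → 𝓧 × Bool | F ((Finset.univ.filter fun i =>
          (fun z : 𝓧 × Bool => h z.1) (ω i) = true).card)
        ((Finset.univ.filter fun i => (fun z : 𝓧 × Bool => h z.1) (ω i) = true ∧
          (fun z : 𝓧 × Bool => z.2) (ω i) = false).card)} := by
    ext ω
    simp only [Set.mem_setOf_eq, hFdef, RhatD, nD, hnum ω]
  rw [hset]
  have hconc := concentration_bound P (fun z : 𝓧 × Bool => h z.1) (fun z : 𝓧 × Bool => z.2)
    (hgm.comp measurable_fst) measurable_snd n c δ hc hδ0 hδ2 F ?_ ?_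
  · refine hconc.trans (le_of_eq ?_)
    rw [ENNReal.ofReal_mul hδ0.le, ← ENNReal.ofReal_rpow_of_pos (by norm_num : (0:ℝ) < 2)]
    norm_num
  · -- ¬ F 0 0
    rw [hFdef]
    simp [pen]
  · -- tail condition
    intro m k hm1 hkm hp0 hFmk
    have hm0 : 0 < m := hm1
    have hmR : (0:ℝ) < (m:ℝ) := by exact_mod_cast hm0
    set t := Real.sqrt ((c * Real.log 2 + Real.log (2/δ)) / (2*(m:ℝ))) with htdef
    have ht0 : 0 ≤ t := Real.sqrt_nonneg _
    have hRD : RD P h = P {z : 𝓧 × Bool | h z.1 = true ∧ z.2 = false} /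
        P {z : 𝓧 × Bool | h z.1 = true} := by
      simp only [RD, hswap, if_pos hp0]
    have hRDfin : RD P h ≠ ⊤ := by
      rw [hRD]
      exact (ENNReal.div_lt_top (measure_ne_top P _) hp0.ne').ne
    set q := (RD P h).toReal with hqdef
    have hq0 : 0 ≤ q := ENNReal.toReal_nonneg
    have hRDq : RD P h = ENNReal.ofReal q := (ENNReal.ofReal_toReal hRDfin).symm
    have hqgoal : (P {z : 𝓧 × Bool | h z.1 = true ∧ z.2 = false} /
        P {z : 𝓧 × Bool | h z.1 = true}).toReal = q := by
      rw [hqdef, hRD]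
    rw [hqgoal]
    rw [hFdef] at hFmk
    simp only [if_pos hm0, pen, hRDq] at hFmk
    have hkm' : ((k:ℝ≥0∞)/(m:ℝ≥0∞)) = ENNReal.ofReal ((k:ℝ)/(m:ℝ)) := by
      rw [ENNReal.ofReal_div_of_pos hmR, ENNReal.ofReal_natCast, ENNReal.ofReal_natCast]
    rw [not_and_or] at hFmk
    have hkm0 : (0:ℝ) ≤ (k:ℝ)/(m:ℝ) := by positivity
    rcases hFmk with hcase | hcase
    · right
      rw [not_le, hkm', ← ENNReal.ofReal_add hkm0 ht0] at hcase
      have hlt := (ENNReal.ofReal_lt_ofReal_iff_of_nonneg (by positivity)).1 hcase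
      have : (k:ℝ) < ((q - t)) * (m:ℝ) := by
        have := (div_lt_iff₀ hmR).1 (by linarith : (k:ℝ)/(m:ℝ) < q - t)
        linarith
      nlinarith
    · left
      rw [not_le, hkm', ← ENNReal.ofReal_add hq0 ht0] at hcase
      have hlt := (ENNReal.ofReal_lt_ofReal_iff_of_nonneg (by positivity)).1 hcase
      have := (lt_div_iff₀ hmR).1 hlt
      nlinarith

open scoped Classical in
lemma badN_bound {𝓧 : Type*} [MeasurableSpace 𝓧] (P : Measure (𝓧 × Bool))
    [IsProbabilityMeasure P] (h : 𝓧 → Bool) (hgm : Measurable h)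
    (c δ : ℝ) (hc : 0 ≤ c) (hδ0 : 0 < δ) (hδ2 : δ < 2) (n : ℕ) :
    (Measure.pi fun _ : Fin n => P)
      {ω : Fin n → 𝓧 × Bool | ¬(RFN P h ≤ RhatFN h ω + penNP c δ (npos ω) ∧
        RhatFN h ω ≤ RFN P h + penNP c δ (npos ω))}
      ≤ ENNReal.ofReal δ * (2:ℝ≥0∞) ^ (-c) := by
  set F : ℕ → ℕ → Prop := fun m k =>
    ¬(RFN P h ≤ (if 0 < m then (k:ℝ≥0∞)/(m:ℝ≥0∞) else 0) + penNP c δ m ∧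
      (if 0 < m then (k:ℝ≥0∞)/(m:ℝ≥0∞) else 0) ≤ RFN P h + penNP c δ m) with hFdef
  have hswap : {z : 𝓧 × Bool | h z.1 = false ∧ z.2 = true}
      = {z : 𝓧 × Bool | z.2 = true ∧ h z.1 = false} := by ext z; exact and_comm
  have hRFN : RFN P h = P {z : 𝓧 × Bool | z.2 = true ∧ h z.1 = false} /
      P {z : 𝓧 × Bool | z.2 = true} := by
    simp only [RFN, hswap]
  have hRFN1 : RFN P h ≤ 1 := by
    rw [RFN]
    exact ENNReal.div_le_of_le_mul (by rw [one_mul]; exact measure_mono fun z hz => hz.2)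
  have hset : {ω : Fin n → 𝓧 × Bool | ¬(RFN P h ≤ RhatFN h ω + penNP c δ (npos ω) ∧
        RhatFN h ω ≤ RFN P h + penNP c δ (npos ω))} =
      {ω : Fin n → 𝓧 × Bool | F ((Finset.univ.filter fun i =>
          (fun z : 𝓧 × Bool => z.2) (ω i) = true).card)
        ((Finset.univ.filter fun i => (fun z : 𝓧 × Bool => z.2) (ω i) = true ∧
          (fun z : 𝓧 × Bool => h z.1) (ω i) = false).card)} := by
    ext ω
    simp only [Set.mem_setOf_eq, hFdef, RhatFN, npos]
    convert Iff.rfl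
    · congr!
    · congr!
  rw [hset]
  have hconc := concentration_bound P (fun z : 𝓧 × Bool => z.2) (fun z : 𝓧 × Bool => h z.1)
    measurable_snd (hgm.comp measurable_fst) n c δ hc hδ0 hδ2 F ?_ ?_
  · refine hconc.trans (le_of_eq ?_)
    rw [ENNReal.ofReal_mul hδ0.le, ← ENNReal.ofReal_rpow_of_pos (by norm_num : (0:ℝ) < 2)]
    norm_num
  · -- ¬ F 0 0
    rw [hFdef]
    simp [penNP, hRFN1]
  · -- tail condition
    intro m k hm1 hkm hp0 hFmk
    have hm0 : 0 < m := hm1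
    have hmR : (0:ℝ) < (m:ℝ) := by exact_mod_cast hm0
    set t := Real.sqrt ((c * Real.log 2 + Real.log (2/δ)) / (2*(m:ℝ))) with htdef
    have ht0 : 0 ≤ t := Real.sqrt_nonneg _
    have hRFNfin : RFN P h ≠ ⊤ := by
      rw [hRFN]
      exact (ENNReal.div_lt_top (measure_ne_top P _) hp0.ne').ne
    set q := (RFN P h).toReal with hqdef
    have hq0 : 0 ≤ q := ENNReal.toReal_nonneg
    have hRFNq : RFN P h = ENNReal.ofReal q := (ENNReal.ofReal_toReal hRFNfin).symm
    have hqgoal : (P {z : 𝓧 × Bool | z.2 = true ∧ h z.1 = false} /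
        P {z : 𝓧 × Bool | z.2 = true}).toReal = q := by
      rw [hqdef, hRFN]
    rw [hqgoal]
    rw [hFdef] at hFmk
    simp only [if_pos hm0, penNP, hRFNq] at hFmk
    have hkm' : ((k:ℝ≥0∞)/(m:ℝ≥0∞)) = ENNReal.ofReal ((k:ℝ)/(m:ℝ)) := by
      rw [ENNReal.ofReal_div_of_pos hmR, ENNReal.ofReal_natCast, ENNReal.ofReal_natCast]
    rw [not_and_or] at hFmk
    have hkm0 : (0:ℝ) ≤ (k:ℝ)/(m:ℝ) := by positivity
    rcases hFmk with hcase | hcase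
    · right
      rw [not_le, hkm', ← ENNReal.ofReal_add hkm0 ht0] at hcase
      have hlt := (ENNReal.ofReal_lt_ofReal_iff_of_nonneg (by positivity)).1 hcase
      have : (k:ℝ) < ((q - t)) * (m:ℝ) := by
        have := (div_lt_iff₀ hmR).1 (by linarith : (k:ℝ)/(m:ℝ) < q - t)
        linarith
      nlinarith
    · left
      rw [not_le, hkm', ← ENNReal.ofReal_add hq0 ht0] at hcase
      have hlt := (ENNReal.ofReal_lt_ofReal_iff_of_nonneg (by positivity)).1 hcase
      have := (lt_div_iff₀ hmR).1 hlt
      nlinarith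


/-- **Corollary 4 (precision and recall).** Let `H` be countable with codelengths
satisfying the Kraft inequality, let `h*` maximize the precision `Q_PR` over
`{h ∈ H : Q_RE(h) ≥ β}` and let `ĥ` maximize `Q̂_PR - φ_D` over
`{h ∈ H : Q̂_RE(h) ≥ β - φ_FN(h, δ)}`.  Then for any `δ > 0` and any `n ≥ 1`, with
probability at least `1 - 2δ` over the training sample, both
`Q_PR(ĥ) ≥ Q_PR(h*) - 2φ_D(h*, δ)` and `Q_RE(ĥ) ≥ β - 2φ_FN(ĥ, δ)`. -/
theorem precision_recall_constrained_learning
    {𝓧 : Type*} [MeasurableSpace 𝓧] (P : Measure (𝓧 × Bool)) [IsProbabilityMeasure P]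
    (hP1 : 0 < P {z : 𝓧 × Bool | z.2 = true})
    (H : Set (𝓧 → Bool)) (hHcount : H.Countable) (hHmeas : ∀ h ∈ H, Measurable h)
    (cl : (𝓧 → Bool) → ℝ)
    (hKraft : ∑' h : H, (2 : ℝ≥0∞) ^ (-(cl h.1)) ≤ 1)
    (n : ℕ) (hn : 1 ≤ n)
    (β : ℝ) (hβ0 : 0 < β) (hβ1 : β < 1)
    (δ : ℝ) (hδ : 0 < δ)
    (hstar : 𝓧 → Bool) (hstar_mem : hstar ∈ H)
    (hstar_feas : ENNReal.ofReal β ≤ QRE P hstar)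
    (hstar_max : ∀ h ∈ H, ENNReal.ofReal β ≤ QRE P h → QPR P h ≤ QPR P hstar)
    (hhat : (Fin n → 𝓧 × Bool) → (𝓧 → Bool))
    (hhat_mem : ∀ ω, hhat ω ∈ H)
    (hhat_feas : ∀ ω, ENNReal.ofReal β - penNP (cl (hhat ω)) δ (npos ω) ≤
      QhatRE (hhat ω) ω)
    (hhat_max : ∀ ω, ∀ h ∈ H, ENNReal.ofReal β - penNP (cl h) δ (npos ω) ≤ QhatRE h ω →
      QhatPR h ω - pen (cl h) δ (nD h ω) ≤
        QhatPR (hhat ω) ω - pen (cl (hhat ω)) δ (nD (hhat ω) ω)) :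
    ENNReal.ofReal (1 - 2 * δ) ≤
      (Measure.pi fun _ : Fin n => P)
        {ω | QPR P hstar - 2 * pen (cl hstar) δ (nD hstar ω) ≤ QPR P (hhat ω) ∧
          ENNReal.ofReal β - 2 * penNP (cl (hhat ω)) δ (npos ω) ≤ QRE P (hhat ω)} := by
    classical
  rcases le_or_gt (1 - 2*δ) 0 with hδhalf | hδhalf
  · rw [ENNReal.ofReal_eq_zero.2 hδhalf]
    exact zero_le
  have hδ2 : δ < 2 := by linarith
  have hcl : ∀ h, h ∈ H → 0 ≤ cl h := by
    intro h hh
    by_contra hneg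
    push_neg at hneg
    have hterm : (2:ℝ≥0∞) ^ (-(cl h)) ≤ 1 :=
      le_trans (ENNReal.le_tsum (⟨h, hh⟩ : H)) hKraft
    have hgt : (1:ℝ≥0∞) < 2 ^ (-(cl h)) := by
      calc (1:ℝ≥0∞) = 2 ^ (0:ℝ) := by rw [ENNReal.rpow_zero]
        _ < 2 ^ (-(cl h)) :=
          ENNReal.rpow_lt_rpow_of_exponent_lt (by norm_num) (by norm_num) (by linarith)
    exact absurd (lt_of_lt_of_le hgt hterm) (lt_irrefl _)
  set μ := (Measure.pi fun _ : Fin n => P) with hμ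
  set good : Set (Fin n → 𝓧 × Bool) := ⋂ h ∈ H,
    ({ω : Fin n → 𝓧 × Bool | RD P h ≤ RhatD h ω + pen (cl h) δ (nD h ω) ∧
        RhatD h ω ≤ RD P h + pen (cl h) δ (nD h ω)} ∩
      {ω : Fin n → 𝓧 × Bool | RFN P h ≤ RhatFN h ω + penNP (cl h) δ (npos ω) ∧
        RhatFN h ω ≤ RFN P h + penNP (cl h) δ (npos ω)}) with hgood_def
  set badU : (𝓧 → Bool) → Set (Fin n → 𝓧 × Bool) := fun h =>
    {ω : Fin n → 𝓧 × Bool | ¬(RD P h ≤ RhatD h ω + pen (cl h) δ (nD h ω) ∧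
        RhatD h ω ≤ RD P h + pen (cl h) δ (nD h ω))} ∪
      {ω : Fin n → 𝓧 × Bool | ¬(RFN P h ≤ RhatFN h ω + penNP (cl h) δ (npos ω) ∧
        RhatFN h ω ≤ RFN P h + penNP (cl h) δ (npos ω))} with hbadU_def
  have hcompl : μ goodᶜ ≤ ENNReal.ofReal (2*δ) := by
    have hc1 : goodᶜ = ⋃ h ∈ H, badU h := by
      rw [hgood_def, Set.compl_iInter₂]
      refine Set.iUnion₂_congr fun h hh => ?_
      rw [Set.compl_inter]
      rfl
    rw [hc1]
    have hbadU_le : ∀ h : 𝓧 → Bool, h ∈ H →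
        μ (badU h) ≤ ENNReal.ofReal δ * 2 ^ (-(cl h)) + ENNReal.ofReal δ * 2 ^ (-(cl h)) := by
      intro h hh
      rw [hbadU_def]
      refine le_trans (measure_union_le _ _) (add_le_add ?_ ?_)
      · exact badD_bound P h (hHmeas h hh) (cl h) δ (hcl h hh) hδ hδ2 n
      · exact badN_bound P h (hHmeas h hh) (cl h) δ (hcl h hh) hδ hδ2 n
    calc μ (⋃ h ∈ H, badU h) ≤ ∑' h : H, μ (badU h.1) := measure_biUnion_le μ hHcount _
      _ ≤ ∑' h : H, (ENNReal.ofReal δ * 2 ^ (-(cl h.1)) + ENNReal.ofReal δ * 2 ^ (-(cl h.1))) :=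
        ENNReal.tsum_le_tsum fun h => hbadU_le h.1 h.2
      _ = 2 * (ENNReal.ofReal δ * ∑' h : H, (2:ℝ≥0∞) ^ (-(cl h.1))) := by
        rw [← ENNReal.tsum_mul_left, ← ENNReal.tsum_mul_left]
        refine tsum_congr fun h => ?_
        rw [two_mul]
      _ ≤ 2 * (ENNReal.ofReal δ * 1) := mul_le_mul_right (mul_le_mul_right hKraft _) 2
      _ = ENNReal.ofReal (2*δ) := by
        rw [mul_one, ENNReal.ofReal_mul (by norm_num : (0:ℝ) ≤ 2)]
        norm_num
  have hgoodlb : ENNReal.ofReal (1 - 2*δ) ≤ μ good := by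
    have huniv : (1:ℝ≥0∞) ≤ μ good + μ goodᶜ := by
      rw [show (1:ℝ≥0∞) = μ Set.univ from (measure_univ (μ := μ)).symm,
        ← Set.union_compl_self good]
      exact measure_union_le _ _
    have h1 : ENNReal.ofReal (1 - 2*δ) + ENNReal.ofReal (2*δ) = 1 := by
      rw [← ENNReal.ofReal_add (by linarith) (by linarith)]
      norm_num
    rw [show ENNReal.ofReal (1-2*δ) = 1 - ENNReal.ofReal (2*δ) from by
      rw [← h1, ENNReal.add_sub_cancel_right ENNReal.ofReal_ne_top]]
    rw [tsub_le_iff_right]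
    exact le_trans huniv (add_le_add_right hcompl _)
  refine le_trans hgoodlb (measure_mono ?_)
  intro ω hω
  rw [hgood_def] at hω
  simp only [Set.mem_iInter, Set.mem_inter_iff, Set.mem_setOf_eq] at hω
  obtain ⟨⟨hD1s, hD2s⟩, ⟨hN1s, hN2s⟩⟩ := hω hstar hstar_mem
  obtain ⟨⟨hD1h, hD2h⟩, ⟨hN1h, hN2h⟩⟩ := hω (hhat ω) (hhat_mem ω)
  have hfeas_star : ENNReal.ofReal β - penNP (cl hstar) δ (npos ω) ≤ QhatRE hstar ω := by
    calc ENNReal.ofReal β - penNP (cl hstar) δ (npos ω)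
        ≤ QRE P hstar - penNP (cl hstar) δ (npos ω) := tsub_le_tsub_right hstar_feas _
      _ = (1 - RFN P hstar) - penNP (cl hstar) δ (npos ω) := by rw [QRE]
      _ = 1 - (RFN P hstar + penNP (cl hstar) δ (npos ω)) := (tsub_add_eq_tsub_tsub _ _ _).symm
      _ ≤ 1 - RhatFN hstar ω := tsub_le_tsub_left hN2s _
      _ = QhatRE hstar ω := by rw [QhatRE]
  have hmax := hhat_max ω hstar hstar_mem hfeas_star
  constructor
  · -- precision guarantee
    calc QPR P hstar - 2 * pen (cl hstar) δ (nD hstar ω)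
        = ((1 - RD P hstar) - pen (cl hstar) δ (nD hstar ω)) - pen (cl hstar) δ (nD hstar ω) := by
          rw [QPR, two_mul, tsub_add_eq_tsub_tsub]
      _ = (1 - (RD P hstar + pen (cl hstar) δ (nD hstar ω))) - pen (cl hstar) δ (nD hstar ω) := by
          rw [tsub_add_eq_tsub_tsub]
      _ ≤ (1 - RhatD hstar ω) - pen (cl hstar) δ (nD hstar ω) :=
          tsub_le_tsub_right (tsub_le_tsub_left hD2s _) _
      _ = QhatPR hstar ω - pen (cl hstar) δ (nD hstar ω) := by rw [QhatPR]
      _ ≤ QhatPR (hhat ω) ω - pen (cl (hhat ω)) δ (nD (hhat ω) ω) := hmax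
      _ = (1 - RhatD (hhat ω) ω) - pen (cl (hhat ω)) δ (nD (hhat ω) ω) := by rw [QhatPR]
      _ = 1 - (RhatD (hhat ω) ω + pen (cl (hhat ω)) δ (nD (hhat ω) ω)) :=
          (tsub_add_eq_tsub_tsub _ _ _).symm
      _ ≤ 1 - RD P (hhat ω) := tsub_le_tsub_left hD1h _
      _ = QPR P (hhat ω) := by rw [QPR]
  · -- recall guarantee
    calc ENNReal.ofReal β - 2 * penNP (cl (hhat ω)) δ (npos ω)
        = (ENNReal.ofReal β - penNP (cl (hhat ω)) δ (npos ω)) - penNP (cl (hhat ω)) δ (npos ω) := by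
          rw [two_mul, tsub_add_eq_tsub_tsub]
      _ ≤ QhatRE (hhat ω) ω - penNP (cl (hhat ω)) δ (npos ω) :=
          tsub_le_tsub_right (hhat_feas ω) _
      _ = (1 - RhatFN (hhat ω) ω) - penNP (cl (hhat ω)) δ (npos ω) := by rw [QhatRE]
      _ = 1 - (RhatFN (hhat ω) ω + penNP (cl (hhat ω)) δ (npos ω)) :=
          (tsub_add_eq_tsub_tsub _ _ _).symm
      _ ≤ 1 - RFN P (hhat ω) := tsub_le_tsub_left hN1h _
      _ = QRE P (hhat ω) := by rw [QRE]
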